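/- arXiv:2403.05929 — 3 statements merged into one kernel-verified Lean document; each statement's English description precedes it below -/
import Mathlib

section
/- Let $1<p_1<p_2<\infty$, $0<\gamma<n$, and let $\mu$ be a positive Borel measure on $\mathbb{R}^n$. If for every ball $B$ the Riesz potential satisfies $\|I_\gamma \chi_B\|_{L^{p_2}(\mu)} \leq C \|\chi_B\|_{L^{p_1}(m)} = C\,[m(B)]^{1/p_1}$, then $\mu(B) \leq C' [m(B)]^{p_2(\frac{1}{p_1}-\frac{\gamma}{n})}$ for every ball $B$, with $C'$ depending only on $C,n,\gamma,p_1,p_2$. -/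
open MeasureTheory ENNReal
open Set

/-- The Riesz potential `I_γ f (x) = ∫ |x-y|^(γ-n) f(y) dm(y)` on `ℝⁿ`. -/
noncomputable def rieszPotential (n : ℕ) (γ : ℝ) (f : EuclideanSpace ℝ (Fin n) → ℝ)
    (x : EuclideanSpace ℝ (Fin n)) : ℝ :=
  ∫ y, ‖x - y‖ ^ (γ - (n : ℝ)) * f y

lemma integrableOn_rpow_ball (n : ℕ) (hn : 0 < n) {s : ℝ} (hs : -(n:ℝ) < s) (hs0 : s < 0)
    (x : EuclideanSpace ℝ (Fin n)) (R : ℝ) :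
    IntegrableOn (fun y => ‖x - y‖ ^ s) (Metric.ball x R) volume := by
  have : Nonempty (Fin n) := ⟨⟨0, hn⟩⟩
  have hmeas : Measurable (fun y : EuclideanSpace ℝ (Fin n) => ‖x - y‖ ^ s) := by fun_prop
  refine ⟨hmeas.aestronglyMeasurable.restrict, ?_⟩
  have hnn : ∀ y : EuclideanSpace ℝ (Fin n), 0 ≤ ‖x - y‖ ^ s := fun y => Real.rpow_nonneg (norm_nonneg _) s
  rw [hasFiniteIntegral_iff_ofReal (Filter.Eventually.of_forall hnn)]
  rw [lintegral_eq_lintegral_meas_le _ (Filter.Eventually.of_forall hnn) hmeas.aemeasurable]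
  set ν := volume.restrict (Metric.ball x R)
  set F : ℝ → ℝ≥0∞ := fun t => ν {a | t ≤ ‖x - a‖ ^ s} with hF
  have key : ∀ t, 1 < t → F t ≤ ENNReal.ofReal (t ^ ((n:ℝ)/s)) *
      .ofReal (Real.sqrt Real.pi ^ Fintype.card (Fin n) / Real.Gamma (Fintype.card (Fin n) / 2 + 1)) := by
    intro t ht
    have ht0 : (0:ℝ) < t := by linarith
    have hsub : {a | t ≤ ‖x - a‖ ^ s} ⊆ Metric.closedBall x (t ^ s⁻¹) := by
      intro a ha
      simp only [mem_setOf_eq] at ha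
      have hd : 0 < ‖x - a‖ := by
        rcases (norm_nonneg (x - a)).lt_or_eq with h' | h'
        · exact h'
        · exfalso; rw [← h', Real.zero_rpow hs0.ne] at ha; linarith
      rw [Metric.mem_closedBall, dist_comm, ← dist_eq_norm] at *
      rw [dist_comm]
      rw [dist_eq_norm] at hd ⊢
      rw [norm_sub_rev]; exact (Real.le_rpow_inv_iff_of_neg hd ht0 hs0).2 ha
    calc F t ≤ volume (Metric.closedBall x (t ^ s⁻¹)) := by
          refine le_trans (Measure.restrict_le_self _) (measure_mono hsub)
      _ = ENNReal.ofReal (t ^ s⁻¹) ^ Fintype.card (Fin n) *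
          .ofReal (Real.sqrt Real.pi ^ Fintype.card (Fin n) / Real.Gamma (Fintype.card (Fin n) / 2 + 1)) :=
          EuclideanSpace.volume_closedBall (Fin n) x _
      _ = ENNReal.ofReal (t ^ ((n:ℝ)/s)) * _ := by
          congr 1
          rw [← ENNReal.ofReal_pow (Real.rpow_nonneg ht0.le _), ← Real.rpow_natCast (t ^ s⁻¹),
            ← Real.rpow_mul ht0.le]
          norm_num [Fintype.card_fin, div_eq_inv_mul]
  calc ∫⁻ t in Ioi (0:ℝ), F t
      ≤ ∫⁻ t in Ioc (0:ℝ) 1 ∪ Ioi 1, F t := lintegral_mono_set Ioi_subset_Ioc_union_Ioi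
    _ ≤ (∫⁻ t in Ioc (0:ℝ) 1, F t) + ∫⁻ t in Ioi 1, F t := lintegral_union_le _ _ _
    _ < ⊤ := by
        refine ENNReal.add_lt_top.2 ⟨?_, ?_⟩
        · have : ∀ t, F t ≤ volume (Metric.ball x R) := fun t =>
            (measure_mono (subset_univ _)).trans_eq (Measure.restrict_apply_univ _)
          calc (∫⁻ t in Ioc (0:ℝ) 1, F t) ≤ ∫⁻ _ in Ioc (0:ℝ) 1, volume (Metric.ball x R) :=
                lintegral_mono fun t => this t
            _ = volume (Metric.ball x R) * volume (Ioc (0:ℝ) 1) := setLIntegral_const _ _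
            _ < ⊤ := ENNReal.mul_lt_top measure_ball_lt_top (by simp [Real.volume_Ioc])
        · have hlt : (n:ℝ)/s < -1 := by
            rw [div_lt_iff_of_neg hs0]
            linarith
          calc ∫⁻ t in Ioi (1:ℝ), F t
              ≤ ∫⁻ t in Ioi (1:ℝ), ENNReal.ofReal (t ^ ((n:ℝ)/s)) *
                .ofReal (Real.sqrt Real.pi ^ Fintype.card (Fin n) / Real.Gamma (Fintype.card (Fin n) / 2 + 1)) := by
                refine setLIntegral_mono' measurableSet_Ioi fun t ht => key t ht
            _ = (∫⁻ t in Ioi (1:ℝ), ENNReal.ofReal (t ^ ((n:ℝ)/s))) *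
                .ofReal (Real.sqrt Real.pi ^ Fintype.card (Fin n) / Real.Gamma (Fintype.card (Fin n) / 2 + 1)) :=
                lintegral_mul_const' _ _ (by simp)
            _ < ⊤ := ENNReal.mul_lt_top
                ((integrableOn_Ioi_rpow_of_lt hlt zero_lt_one).setLIntegral_lt_top) (by simp)

lemma aux_rpow_ne_top {x : ℝ≥0∞} (h0 : x ≠ 0) (ht : x ≠ ⊤) (y : ℝ) : x ^ y ≠ ⊤ := by
  simp [ENNReal.rpow_eq_top_iff, h0, ht]

/-- if `‖I_γ χ_B‖_{L^{p₂}(μ)} ≤ C · m(B)^{1/p₁}` for every ball `B`,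
then `μ(B) ≤ C' · m(B)^{p₂(1/p₁ - γ/n)}` for every ball `B`. -/
theorem trace_necessary_ball_growth (n : ℕ) (hn : 0 < n) (p1 p2 γ : ℝ)
    (μ : Measure (EuclideanSpace ℝ (Fin n)))
    (hp1 : 1 < p1) (h12 : p1 < p2) (hγ0 : 0 < γ) (hγn : γ < n)
    (C : ℝ≥0∞) (hC : C ≠ ⊤)
    (h : ∀ (z : EuclideanSpace ℝ (Fin n)) (r : ℝ), 0 < r →
      eLpNorm (rieszPotential n γ ((Metric.ball z r).indicator (fun _ => (1:ℝ))))
          (ENNReal.ofReal p2) μ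
        ≤ C * (volume (Metric.ball z r)) ^ (1 / p1)) :
    ∃ C' : ℝ≥0∞, C' ≠ ⊤ ∧ ∀ (z : EuclideanSpace ℝ (Fin n)) (r : ℝ), 0 < r →
      μ (Metric.ball z r) ≤ C' * (volume (Metric.ball z r)) ^ (p2 * (1 / p1 - γ / n)) := by
  have hnne : Nonempty (Fin n) := ⟨⟨0, hn⟩⟩
  have hp2pos : (0:ℝ) < p2 := by linarith
  have hp2ne : p2 ≠ 0 := hp2pos.ne'
  set s : ℝ := γ - n with hsdef
  have hs : -(n:ℝ) < s := by rw [hsdef]; linarith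
  have hs0 : s < 0 := by rw [hsdef]; linarith
  set kr : ℝ := Real.sqrt Real.pi ^ n / Real.Gamma (n / 2 + 1) with hkrdef
  have hkr : 0 < kr := by
    apply div_pos (pow_pos (Real.sqrt_pos.2 Real.pi_pos) n)
    apply Real.Gamma_pos_of_pos; positivity
  set D : ℝ≥0∞ := (ENNReal.ofReal kr) ^ (p2 * (γ / (n:ℝ) - 1)) * (2:ℝ≥0∞) ^ (((n:ℝ) - γ) * p2)
    with hDdef
  refine ⟨C ^ p2 * D, ?_, ?_⟩
  · refine ENNReal.mul_ne_top (ENNReal.rpow_ne_top_of_nonneg hp2pos.le hC) ?_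
    exact ENNReal.mul_ne_top
      (aux_rpow_ne_top (by simp [ENNReal.ofReal_eq_zero]; linarith) ENNReal.ofReal_ne_top _)
      (aux_rpow_ne_top (by norm_num) (by norm_num) _)
  intro z r hr
  set B := Metric.ball z r with hBdef
  set vr : ℝ := r ^ n * kr with hvrdef
  have hvr : 0 < vr := mul_pos (pow_pos hr n) hkr
  have hv : volume B = ENNReal.ofReal vr := by
    rw [hBdef, EuclideanSpace.volume_ball (Fin n) z r, hvrdef,
      ENNReal.ofReal_mul (by positivity), ENNReal.ofReal_pow hr.le, Fintype.card_fin]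
  have hv0 : volume B ≠ 0 := by rw [hv]; simp [ENNReal.ofReal_eq_zero]; linarith
  have hvt : volume B ≠ ⊤ := by rw [hv]; exact ENNReal.ofReal_ne_top
  set a : ℝ := vr * (2 * r) ^ s with hadef
  have h2r : (0:ℝ) < 2 * r := by linarith
  have ha : 0 < a := mul_pos hvr (Real.rpow_pos_of_pos h2r s)
  -- Step 1: pointwise lower bound on the ball
  have hlow : ∀ x ∈ B, a ≤ rieszPotential n γ (B.indicator fun _ => (1:ℝ)) x := by
    intro x hx
    have hint : rieszPotential n γ (B.indicator fun _ => (1:ℝ)) x = ∫ y in B, ‖x - y‖ ^ s := by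
      rw [rieszPotential]
      rw [show (fun y => ‖x - y‖ ^ (γ - (n:ℝ)) * (B.indicator (fun _ => (1:ℝ)) y))
          = B.indicator (fun y => ‖x - y‖ ^ s) by
        funext y; by_cases hy : y ∈ B <;> simp [hy, hsdef]]
      exact integral_indicator Metric.isOpen_ball.measurableSet
    have hBsub : B ⊆ Metric.ball x (2 * r) := by
      intro y hy
      rw [hBdef, Metric.mem_ball] at hx hy
      rw [Metric.mem_ball]
      calc dist y x ≤ dist y z + dist z x := dist_triangle y z x
        _ = dist y z + dist x z := by rw [dist_comm z x]
        _ < 2 * r := by linarith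
    have hint1 : IntegrableOn (fun y => ‖x - y‖ ^ s) B volume :=
      (integrableOn_rpow_ball n hn hs hs0 x (2 * r)).mono_set hBsub
    have hconst : IntegrableOn (fun _ => (2 * r) ^ s) B volume :=
      integrableOn_const (by rw [hv]; exact ENNReal.ofReal_ne_top) enorm_ne_top
    have hae : (fun _ => (2 * r) ^ s) ≤ᵐ[volume.restrict B] fun y => ‖x - y‖ ^ s := by
      have h1 : ∀ᵐ y ∂(volume.restrict B), y ∈ B :=
        ae_restrict_mem Metric.isOpen_ball.measurableSet
      have h2 : ∀ᵐ y ∂(volume.restrict B), y ≠ x := by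
        refine ae_iff.2 ?_
        rw [show {y : EuclideanSpace ℝ (Fin n) | ¬y ≠ x} = {x} by ext; simp]
        exact le_antisymm (le_trans (Measure.restrict_le_self _) (by simp)) zero_le
      filter_upwards [h1, h2] with y hyB hyx
      have hd0 : 0 < ‖x - y‖ := by
        rw [norm_pos_iff]; exact sub_ne_zero.2 (Ne.symm hyx)
      have hle : ‖x - y‖ ≤ 2 * r := by
        rw [← dist_eq_norm]
        rw [hBdef, Metric.mem_ball] at hx hyB
        calc dist x y ≤ dist x z + dist z y := dist_triangle x z y
          _ = dist x z + dist y z := by rw [dist_comm z y]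
          _ ≤ 2 * r := by linarith
      exact Real.rpow_le_rpow_of_nonpos hd0 hle hs0.le
    calc a = ∫ _ in B, (2 * r) ^ s := by
          rw [setIntegral_const, measureReal_def, hv, ENNReal.toReal_ofReal hvr.le, smul_eq_mul, hadef]
      _ ≤ ∫ y in B, ‖x - y‖ ^ s := setIntegral_mono_ae_restrict hconst hint1 hae
      _ = rieszPotential n γ (B.indicator fun _ => (1:ℝ)) x := hint.symm
  -- Step 2: eLpNorm lower bound
  have hp0 : ENNReal.ofReal p2 ≠ 0 := by simp [ENNReal.ofReal_eq_zero]; linarith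
  have hA0 : ENNReal.ofReal a ≠ 0 := by simp [ENNReal.ofReal_eq_zero]; linarith
  have h2 : ENNReal.ofReal a * μ B ^ (1 / p2) ≤ C * (volume B) ^ (1 / p1) := by
    have hnorm : ∀ x, ‖B.indicator (fun _ => a) x‖
        ≤ ‖rieszPotential n γ (B.indicator fun _ => (1:ℝ)) x‖ := by
      intro x
      by_cases hx : x ∈ B
      · rw [Set.indicator_of_mem hx, Real.norm_eq_abs, abs_of_pos ha]
        exact le_trans (hlow x hx) (le_abs_self _)
      · rw [Set.indicator_of_notMem hx]; simp
    calc ENNReal.ofReal a * μ B ^ (1 / p2)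
        = eLpNorm (B.indicator fun _ => a) (ENNReal.ofReal p2) μ := by
          rw [eLpNorm_indicator_const Metric.isOpen_ball.measurableSet hp0 ENNReal.ofReal_ne_top,
            ENNReal.toReal_ofReal hp2pos.le, Real.enorm_eq_ofReal ha.le]
      _ ≤ eLpNorm (rieszPotential n γ (B.indicator fun _ => (1:ℝ))) (ENNReal.ofReal p2) μ :=
          eLpNorm_mono hnorm
      _ ≤ C * (volume B) ^ (1 / p1) := h z r hr
  -- Step 3: algebra
  have hmu : μ B ≤ ((ENNReal.ofReal a)⁻¹ * (C * (volume B) ^ (1 / p1))) ^ p2 := by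
    have hx : μ B ^ (1 / p2) ≤ (ENNReal.ofReal a)⁻¹ * (C * (volume B) ^ (1 / p1)) := by
      calc μ B ^ (1 / p2)
          = (ENNReal.ofReal a)⁻¹ * (ENNReal.ofReal a * μ B ^ (1 / p2)) := by
            rw [← mul_assoc, ENNReal.inv_mul_cancel hA0 ENNReal.ofReal_ne_top, one_mul]
        _ ≤ _ := mul_le_mul_right h2 _
    calc μ B = (μ B ^ (1 / p2)) ^ p2 := by
          rw [← ENNReal.rpow_mul, one_div, inv_mul_cancel₀ hp2ne, ENNReal.rpow_one]
      _ ≤ _ := ENNReal.rpow_le_rpow hx hp2pos.le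
  refine le_trans hmu (le_of_eq ?_)
  -- the real-number identity
  have hreal : (a⁻¹ * vr ^ (1 / p1)) ^ p2
      = kr ^ (p2 * (γ / (n:ℝ) - 1)) * 2 ^ (((n:ℝ) - γ) * p2)
        * vr ^ (p2 * (1 / p1 - γ / (n:ℝ))) := by
    have hL : (0:ℝ) < (a⁻¹ * vr ^ (1 / p1)) ^ p2 := by positivity
    have hR : (0:ℝ) < kr ^ (p2 * (γ / (n:ℝ) - 1)) * 2 ^ (((n:ℝ) - γ) * p2)
        * vr ^ (p2 * (1 / p1 - γ / (n:ℝ))) := by positivity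
    rw [← Real.exp_log hL, ← Real.exp_log hR]
    congr 1
    have hlogv : Real.log vr = n * Real.log r + Real.log kr := by
      rw [hvrdef, Real.log_mul (by positivity) hkr.ne', Real.log_pow]
    have hloga : Real.log a = Real.log vr + s * (Real.log 2 + Real.log r) := by
      rw [hadef, Real.log_mul hvr.ne' (by positivity), Real.log_rpow h2r,
        Real.log_mul two_ne_zero hr.ne']
    rw [Real.log_rpow (by positivity), Real.log_mul (ne_of_gt (by positivity))
        (ne_of_gt (by positivity)), Real.log_inv, Real.log_rpow hvr,
      Real.log_mul (ne_of_gt (by positivity)) (ne_of_gt (by positivity)),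
      Real.log_mul (ne_of_gt (by positivity)) (ne_of_gt (by positivity)),
      Real.log_mul (ne_of_gt (by positivity)) (ne_of_gt (by positivity)),
      Real.log_mul (ne_of_gt (by positivity)) (ne_of_gt (by positivity)),
      Real.log_rpow hkr, Real.log_rpow two_pos, Real.log_rpow hvr,
      Real.log_rpow h2r, Real.log_mul two_ne_zero hr.ne', Real.log_pow,
      Real.log_mul (ne_of_gt (by positivity)) hkr.ne', Real.log_pow, hsdef]
    have hn' : (n:ℝ) ≠ 0 := Nat.cast_ne_zero.2 hn.ne'
    field_simp
    ring
  -- transfer to ℝ≥0∞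
  calc ((ENNReal.ofReal a)⁻¹ * (C * (volume B) ^ (1 / p1))) ^ p2
      = (C * ((ENNReal.ofReal a)⁻¹ * (volume B) ^ (1 / p1))) ^ p2 := by ring_nf
    _ = C ^ p2 * ((ENNReal.ofReal a)⁻¹ * (volume B) ^ (1 / p1)) ^ p2 :=
        ENNReal.mul_rpow_of_nonneg _ _ hp2pos.le
    _ = C ^ p2 * ENNReal.ofReal ((a⁻¹ * vr ^ (1 / p1)) ^ p2) := by
        rw [← ENNReal.ofReal_inv_of_pos ha, hv, ENNReal.ofReal_rpow_of_pos hvr,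
          ← ENNReal.ofReal_mul (by positivity), ENNReal.ofReal_rpow_of_pos (by positivity)]
    _ = C ^ p2 * (D * (volume B) ^ (p2 * (1 / p1 - γ / n))) := by
        rw [hreal, ENNReal.ofReal_mul (by positivity), ENNReal.ofReal_mul (by positivity),
          ← ENNReal.ofReal_rpow_of_pos hkr, ← ENNReal.ofReal_rpow_of_pos two_pos,
          ← ENNReal.ofReal_rpow_of_pos hvr, ← hv, hDdef, ENNReal.ofReal_ofNat]
    _ = C ^ p2 * D * (volume B) ^ (p2 * (1 / p1 - γ / n)) := by rw [hDdef]; ring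
end

section
/- Let $n=1$, $1<p_1<p_2<\infty$, $0<\gamma<1/p_1$, $\beta=p_2(\frac{1}{p_1}-\gamma)\leq 1$, $\mu$ the measure with density $x^{\beta-1}\chi_{(0,\infty)}$, and $f=\chi_{\Omega_1}$ where $\Omega_1=\{1\leq|x|<2\}$. Then $\|I_\gamma f\|_{\dot K^{p_2}_{\lambda,q_2}(\mathbb{R},\mu)} = \infty$ whenever $\lambda \leq \gamma-\frac{1}{p_1}$ or $\lambda \geq 1-\frac{1}{p_1}$ (for any $1\leq q_2<\infty$), while $\|f\|_{\dot K^{p_1}_{\lambda,q_1}(\mathbb{R},m)}<\infty$. Hence the condition $\gamma-\frac{1}{p_1}<\lambda<1-\frac{1}{p_1}$ in the trace theorem is necessary. -/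
open MeasureTheory ENNReal

/-- The Riesz potential `I_γ f (x) = ∫ |x-y|^(γ-1) f(y) dy` on `ℝ`. -/
noncomputable def rieszPotential1 (γ : ℝ) (f : ℝ → ℝ) (x : ℝ) : ℝ :=
  ∫ y, |x - y| ^ (γ - 1) * f y

/-- The dyadic annulus `Ω_t = {x ∈ ℝ : 2^(t-1) ≤ |x| < 2^t}`. -/
def annulus1 (t : ℤ) : Set ℝ := {x | (2 : ℝ) ^ (t - 1) ≤ |x| ∧ |x| < (2 : ℝ) ^ t}

/-- The homogeneous Herz (quasi-)norm on `ℝ`: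
`‖f‖_{K̇^p_{λ,q}(ν)} = (∑_{t ∈ ℤ} 2^{tλq} ‖f χ_{Ω_t}‖_{L^p(ν)}^q)^{1/q}`. -/
noncomputable def herzNorm1 (p : ℝ≥0∞) (lam q : ℝ) (ν : Measure ℝ) (f : ℝ → ℝ) : ℝ≥0∞ :=
  (∑' t : ℤ, (2 : ℝ≥0∞) ^ ((t : ℝ) * lam * q) *
      (eLpNorm ((annulus1 t).indicator f) p ν) ^ q) ^ (1 / q)

/-- The measure on `ℝ` with density `x^(β-1) χ_{(0,∞)}(x)` w.r.t. Lebesgue measure. -/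
noncomputable def muBeta (β : ℝ) : Measure ℝ :=
  volume.withDensity (fun x => if 0 < x then ENNReal.ofReal (x ^ (β - 1)) else 0)

lemma measurableSet_annulus1 (t : ℤ) : MeasurableSet (annulus1 t) := by
  have : annulus1 t = (fun x : ℝ => |x|) ⁻¹' Set.Ico ((2:ℝ)^(t-1)) ((2:ℝ)^t) := rfl
  rw [this]
  exact measurable_abs measurableSet_Ico

lemma volume_annulus1_ne_top (t : ℤ) : volume (annulus1 t) ≠ ⊤ := by
  have hsub : annulus1 t ⊆ Set.Icc (-(2:ℝ)^t) ((2:ℝ)^t) := by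
    intro x hx
    have h := abs_lt.1 hx.2
    exact ⟨h.1.le, h.2.le⟩
  exact ((measure_mono hsub).trans_lt measure_Icc_lt_top).ne

lemma two_rpow_ofReal (r : ℝ) : ENNReal.ofReal ((2:ℝ) ^ r) = (2:ℝ≥0∞) ^ r := by
  rw [← ENNReal.ofReal_rpow_of_pos two_pos]
  norm_num

lemma two_rpow_ne_top (r : ℝ) : (2:ℝ≥0∞) ^ r ≠ ⊤ := by
  rw [← two_rpow_ofReal]; exact ENNReal.ofReal_ne_top

lemma two_rpow_ne_zero (r : ℝ) : (2:ℝ≥0∞) ^ r ≠ 0 := by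
  rw [← two_rpow_ofReal]
  exact (ENNReal.ofReal_pos.2 (Real.rpow_pos_of_pos two_pos r)).ne'

lemma Ico_subset_annulus1 (t : ℤ) :
    Set.Ico ((2:ℝ)^(t-1)) ((2:ℝ)^t) ⊆ annulus1 t := by
  intro x hx
  have h0 : (0:ℝ) < 2^(t-1) := zpow_pos (by norm_num) _
  have hax : |x| = x := abs_of_pos (lt_of_lt_of_le h0 hx.1)
  exact ⟨hax.symm ▸ hx.1, hax.symm ▸ hx.2⟩

lemma tsum_top_of_inj {a : ℤ → ℝ≥0∞} (g : ℕ → ℤ) (hg : Function.Injective g)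
    {ε : ℝ≥0∞} (hε : ε ≠ 0) (h : ∀ n, ε ≤ a (g n)) : ∑' t, a t = ⊤ := by
  by_contra h'
  exact (Set.infinite_of_injective_forall_mem (s := {t : ℤ | ε ≤ a t}) hg (fun n => h n))
    (ENNReal.finite_const_le_of_tsum_ne_top h' hε)

lemma riesz_lb (γ : ℝ) (hγ1 : γ < 1) {x a b : ℝ} (ha : 0 < a)
    (hab : ∀ y ∈ annulus1 1, a ≤ |x - y| ∧ |x - y| ≤ b) :
    b ^ (γ - 1) ≤ rieszPotential1 γ ((annulus1 1).indicator (fun _ => (1:ℝ))) x := by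
  have hmeas : MeasurableSet (annulus1 1) := measurableSet_annulus1 1
  have hfun : (fun y => |x - y| ^ (γ - 1) * (annulus1 1).indicator (fun _ => (1:ℝ)) y)
      = (annulus1 1).indicator (fun y => |x - y| ^ (γ - 1)) := by
    funext y
    by_cases hy : y ∈ annulus1 1 <;>
      simp [Set.indicator_of_mem, Set.indicator_of_notMem, hy]
  have hm : Measurable (fun y : ℝ => |x - y| ^ (γ - 1)) :=
    (measurable_const.sub measurable_id).abs.pow measurable_const
  have hint : Integrable ((annulus1 1).indicator (fun y => |x - y| ^ (γ - 1))) := by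
    rw [integrable_indicator_iff hmeas]
    apply Measure.integrableOn_of_bounded (M := a ^ (γ - 1)) (volume_annulus1_ne_top 1)
      hm.aestronglyMeasurable
    refine ae_restrict_of_forall_mem hmeas (fun y hy => ?_)
    rw [Real.norm_eq_abs, abs_of_nonneg (Real.rpow_nonneg (abs_nonneg _) _)]
    exact Real.rpow_le_rpow_of_nonpos ha (hab y hy).1 (by linarith)
  have hIco : Set.Ico (1:ℝ) 2 ⊆ annulus1 1 := by
    intro y hy
    have h1 : (0:ℝ) ≤ y := le_trans zero_le_one hy.1
    constructor
    · rw [abs_of_nonneg h1]; simpa using hy.1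
    · rw [abs_of_nonneg h1]; simpa using hy.2
  have hintc : Integrable ((Set.Ico (1:ℝ) 2).indicator (fun _ => b ^ (γ-1))) := by
    rw [integrable_indicator_iff measurableSet_Ico]
    exact integrableOn_const (by rw [Real.volume_Ico]; norm_num)
  have hpoint : ∀ y, (Set.Ico (1:ℝ) 2).indicator (fun _ => b ^ (γ-1)) y ≤
      (annulus1 1).indicator (fun y => |x - y| ^ (γ - 1)) y := by
    intro y
    by_cases hy : y ∈ Set.Ico (1:ℝ) 2
    · rw [Set.indicator_of_mem hy, Set.indicator_of_mem (hIco hy)]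
      have h := hab y (hIco hy)
      exact Real.rpow_le_rpow_of_nonpos (lt_of_lt_of_le ha h.1) h.2 (by linarith)
    · rw [Set.indicator_of_notMem hy]
      exact Set.indicator_nonneg (fun z _ => Real.rpow_nonneg (abs_nonneg _) _) y
  have hval : ∫ y, (Set.Ico (1:ℝ) 2).indicator (fun _ => b ^ (γ-1)) y = b ^ (γ-1) := by
    rw [integral_indicator_const _ measurableSet_Ico, Measure.real, Real.volume_Ico]
    norm_num
  calc b ^ (γ - 1) = ∫ y, (Set.Ico (1:ℝ) 2).indicator (fun _ => b ^ (γ-1)) y := hval.symm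
    _ ≤ ∫ y, (annulus1 1).indicator (fun y => |x - y| ^ (γ - 1)) y :=
        integral_mono hintc hint hpoint
    _ = rieszPotential1 γ ((annulus1 1).indicator (fun _ => (1:ℝ))) x := by
        rw [rieszPotential1, hfun]

lemma eLpNorm_indicator_lb {g : ℝ → ℝ} {s S : Set ℝ} (hs : MeasurableSet s)
    (hsub : s ⊆ S) {c : ℝ} (hc : 0 ≤ c) (hg : ∀ x ∈ s, c ≤ g x)
    {p : ℝ≥0∞} (hp0 : p ≠ 0) (hpt : p ≠ ⊤) (ν : Measure ℝ) :
    ENNReal.ofReal c * ν s ^ (1 / p.toReal) ≤ eLpNorm (S.indicator g) p ν := by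
  have h1 : eLpNorm (s.indicator (fun _ => c)) p ν ≤ eLpNorm (S.indicator g) p ν := by
    apply eLpNorm_mono
    intro x
    by_cases hx : x ∈ s
    · rw [Set.indicator_of_mem hx, Set.indicator_of_mem (hsub hx),
        Real.norm_eq_abs, Real.norm_eq_abs, abs_of_nonneg hc]
      exact le_trans (hg x hx) (le_abs_self _)
    · rw [Set.indicator_of_notMem hx]; simp
  rw [eLpNorm_indicator_const hs hp0 hpt] at h1
  refine le_trans (le_of_eq ?_) h1
  congr 1
  rw [Real.enorm_of_nonneg hc]

lemma muBeta_lb (β : ℝ) (hβ1 : β ≤ 1) (t : ℤ) :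
    ENNReal.ofReal (((2:ℝ)^t) ^ (β-1) * (2:ℝ)^(t-1))
      ≤ muBeta β (Set.Ico ((2:ℝ)^(t-1)) ((2:ℝ)^t)) := by
  rw [muBeta, withDensity_apply _ measurableSet_Ico]
  have h2 : (0:ℝ) < 2^(t-1) := zpow_pos (by norm_num) _
  have h2t : (2:ℝ)^t = 2^(t-1) * 2 := by
    rw [← zpow_add_one₀ (by norm_num : (2:ℝ) ≠ 0), sub_add_cancel]
  calc ENNReal.ofReal (((2:ℝ)^t) ^ (β-1) * (2:ℝ)^(t-1))
      = ENNReal.ofReal (((2:ℝ)^t) ^ (β-1)) * volume (Set.Ico ((2:ℝ)^(t-1)) ((2:ℝ)^t)) := by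
        rw [Real.volume_Ico, ← ENNReal.ofReal_mul (Real.rpow_nonneg (by positivity) _)]
        congr 2
        rw [h2t]; ring
    _ = ∫⁻ _ in Set.Ico ((2:ℝ)^(t-1)) ((2:ℝ)^t), ENNReal.ofReal (((2:ℝ)^t)^(β-1)) := by
        rw [setLIntegral_const]
    _ ≤ ∫⁻ x in Set.Ico ((2:ℝ)^(t-1)) ((2:ℝ)^t),
          (if 0 < x then ENNReal.ofReal (x ^ (β-1)) else 0) := by
        apply setLIntegral_mono' measurableSet_Ico
        intro x hx
        have hx0 : 0 < x := lt_of_lt_of_le h2 hx.1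
        rw [if_pos hx0]
        exact ENNReal.ofReal_le_ofReal
          (Real.rpow_le_rpow_of_nonpos hx0 hx.2.le (by linarith))

/-- necessity of `γ - 1/p₁ < λ < 1 - 1/p₁`: with `f = χ_{Ω₁}` and
`μ = muBeta β`, `β = p₂(1/p₁-γ) ≤ 1`, if `λ ≤ γ - 1/p₁` or `λ ≥ 1 - 1/p₁` then
`‖I_γ f‖_{K̇^{p₂}_{λ,q₂}(μ)} = ∞` while `‖f‖_{K̇^{p₁}_{λ,q₁}(m)} < ∞`. -/
theorem lambda_range_necessary (p1 p2 γ β lam q1 q2 : ℝ)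
    (hp1 : 1 < p1) (h12 : p1 < p2) (hγ0 : 0 < γ) (hγ : γ < 1 / p1)
    (hβ : β = p2 * (1 / p1 - γ)) (hβ1 : β ≤ 1)
    (hq1 : 1 ≤ q1) (hq2 : 1 ≤ q2)
    (hlam : lam ≤ γ - 1 / p1 ∨ 1 - 1 / p1 ≤ lam) :
    herzNorm1 (ENNReal.ofReal p2) lam q2 (muBeta β)
        (rieszPotential1 γ ((annulus1 1).indicator (fun _ => (1 : ℝ)))) = ⊤ ∧
    herzNorm1 (ENNReal.ofReal p1) lam q1 volume
        ((annulus1 1).indicator (fun _ => (1 : ℝ))) ≠ ⊤ := by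
  have hp1pos : 0 < p1 := lt_trans one_pos hp1
  have hp2pos : 0 < p2 := lt_trans hp1pos h12
  have hq2pos : 0 < q2 := lt_of_lt_of_le one_pos hq2
  have hq1pos : 0 < q1 := lt_of_lt_of_le one_pos hq1
  have hp1inv : 1 / p1 < 1 := by
    rw [div_lt_one hp1pos]; exact hp1
  have hγ1 : γ < 1 := lt_trans hγ hp1inv
  constructor
  · -- Herz norm of the Riesz potential is infinite
    have hP0 : (ENNReal.ofReal p2) ≠ 0 := (ENNReal.ofReal_pos.2 hp2pos).ne'
    have hPt : (ENNReal.ofReal p2) ≠ ⊤ := ENNReal.ofReal_ne_top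
    have hPr : (ENNReal.ofReal p2).toReal = p2 := ENNReal.toReal_ofReal hp2pos.le
    have hβp2 : β * (1/p2) = 1/p1 - γ := by
      rw [hβ]; field_simp
    have key : ∀ (t : ℤ) (c : ℝ), 0 < c →
        (∀ x ∈ Set.Ico ((2:ℝ)^(t-1)) ((2:ℝ)^t),
          c ≤ rieszPotential1 γ ((annulus1 1).indicator (fun _ => (1:ℝ))) x) →
        ENNReal.ofReal c ^ q2 * (2:ℝ≥0∞) ^ (((t:ℝ)*lam + ((t:ℝ)*β - 1) * (1/p2)) * q2)
          ≤ (2:ℝ≥0∞) ^ ((t:ℝ)*lam*q2) *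
            (eLpNorm ((annulus1 t).indicator
              (rieszPotential1 γ ((annulus1 1).indicator (fun _ => (1:ℝ)))))
              (ENNReal.ofReal p2) (muBeta β)) ^ q2 := by
      intro t c hc hr
      have hμ : (2:ℝ≥0∞) ^ ((t:ℝ)*β - 1) ≤ muBeta β (Set.Ico ((2:ℝ)^(t-1)) ((2:ℝ)^t)) := by
        refine le_trans (le_of_eq ?_) (muBeta_lb β hβ1 t)
        rw [← two_rpow_ofReal]
        congr 1
        rw [← Real.rpow_intCast 2 t, ← Real.rpow_intCast 2 (t-1),
          ← Real.rpow_mul (by norm_num), ← Real.rpow_add (by norm_num)]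
        congr 1
        push_cast
        ring
      have h1 : ENNReal.ofReal c * (muBeta β (Set.Ico ((2:ℝ)^(t-1)) ((2:ℝ)^t))) ^ (1/p2)
          ≤ eLpNorm ((annulus1 t).indicator
              (rieszPotential1 γ ((annulus1 1).indicator (fun _ => (1:ℝ)))))
              (ENNReal.ofReal p2) (muBeta β) := by
        have := eLpNorm_indicator_lb measurableSet_Ico (Ico_subset_annulus1 t) hc.le hr
          hP0 hPt (muBeta β)
        rwa [hPr] at this
      have h2 : ENNReal.ofReal c * (2:ℝ≥0∞) ^ (((t:ℝ)*β - 1) * (1/p2))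
          ≤ eLpNorm ((annulus1 t).indicator
              (rieszPotential1 γ ((annulus1 1).indicator (fun _ => (1:ℝ)))))
              (ENNReal.ofReal p2) (muBeta β) := by
        refine le_trans ?_ h1
        rw [ENNReal.rpow_mul]
        exact mul_le_mul_right (ENNReal.rpow_le_rpow hμ (by positivity)) _
      calc ENNReal.ofReal c ^ q2 * (2:ℝ≥0∞) ^ (((t:ℝ)*lam + ((t:ℝ)*β - 1) * (1/p2)) * q2)
          = (2:ℝ≥0∞) ^ ((t:ℝ)*lam*q2) *
            (ENNReal.ofReal c * (2:ℝ≥0∞) ^ (((t:ℝ)*β - 1) * (1/p2))) ^ q2 := by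
            rw [ENNReal.mul_rpow_of_nonneg _ _ hq2pos.le, ← ENNReal.rpow_mul,
              show ((t:ℝ)*lam + ((t:ℝ)*β - 1) * (1/p2)) * q2
                = (t:ℝ)*lam*q2 + ((t:ℝ)*β - 1) * (1/p2) * q2 by ring,
              ENNReal.rpow_add _ _ (by norm_num) (by norm_num)]
            ring
        _ ≤ _ := mul_le_mul_right (ENNReal.rpow_le_rpow h2 hq2pos.le) _
    have htop : (∑' t : ℤ, (2 : ℝ≥0∞) ^ ((t : ℝ) * lam * q2) *
        (eLpNorm ((annulus1 t).indicator
          (rieszPotential1 γ ((annulus1 1).indicator (fun _ => (1:ℝ)))))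
          (ENNReal.ofReal p2) (muBeta β)) ^ q2) = ⊤ := by
      rcases hlam with hl | hl
      · refine tsum_top_of_inj (fun n : ℕ => -1 - (n:ℤ)) (fun m n h => by dsimp only at h; omega)
          (ε := ENNReal.ofReal ((3:ℝ) ^ (γ-1)) ^ q2 * (2:ℝ≥0∞) ^ ((-(1/p2)) * q2)) ?_ ?_
        · exact mul_ne_zero
            ((ENNReal.rpow_pos (ENNReal.ofReal_pos.2
              (Real.rpow_pos_of_pos (by norm_num) _)) ENNReal.ofReal_ne_top).ne')
            (two_rpow_ne_zero _)
        · intro n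
          set t : ℤ := -1 - (n:ℤ) with hts
          have ht : t ≤ -1 := by omega
          have hr : ∀ x ∈ Set.Ico ((2:ℝ)^(t-1)) ((2:ℝ)^t),
              (3:ℝ)^(γ-1) ≤ rieszPotential1 γ ((annulus1 1).indicator (fun _ => (1:ℝ))) x := by
            intro x hx
            refine riesz_lb γ hγ1 (a := 1/2) (by norm_num) ?_
            intro y hy
            obtain ⟨hy1, hy2⟩ := hy
            have hy1' : (1:ℝ) ≤ |y| := by simpa using hy1
            have hy2' : |y| < 2 := by simpa using hy2
            have hx0 : 0 < x := lt_of_lt_of_le (zpow_pos (by norm_num) _) hx.1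
            have hxu : x ≤ 1/2 := by
              have h1 : (2:ℝ)^t ≤ 2^(-1:ℤ) := zpow_le_zpow_right₀ (by norm_num) ht
              have h2 : (2:ℝ)^(-1:ℤ) = 1/2 := by norm_num
              rw [h2] at h1
              have hxr : x < (2:ℝ)^t := hx.2
              linarith
            constructor
            · have h := abs_sub_abs_le_abs_sub y x
              rw [abs_sub_comm y x, abs_of_pos hx0] at h
              linarith
            · calc |x - y| = |x + (-y)| := by ring_nf
                _ ≤ |x| + |(-y)| := abs_add_le _ _
                _ = x + |y| := by rw [abs_of_pos hx0, abs_neg]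
                _ ≤ 3 := by linarith
          refine le_trans ?_ (key t _ (Real.rpow_pos_of_pos (by norm_num) _) hr)
          refine mul_le_mul_right ?_ _
          refine ENNReal.rpow_le_rpow_of_exponent_le (by norm_num) ?_
          have htR : (t:ℝ) ≤ 0 := by exact_mod_cast (by omega : t ≤ (0:ℤ))
          have hs : lam + β * (1/p2) ≤ 0 := by rw [hβp2]; linarith
          have hprod : 0 ≤ (t:ℝ) * (lam + β*(1/p2)) := by nlinarith
          have hid : ((t:ℝ)*lam + ((t:ℝ)*β - 1) * (1/p2)) * q2 - (-(1/p2)) * q2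
              = ((t:ℝ) * (lam + β*(1/p2))) * q2 := by ring
          nlinarith [mul_nonneg hprod hq2pos.le]
      · refine tsum_top_of_inj (fun n : ℕ => (n:ℤ) + 3) (fun m n h => by dsimp only at h; omega)
          (ε := (2:ℝ≥0∞) ^ ((γ - 1 - 1/p2) * q2)) (two_rpow_ne_zero _) ?_
        intro n
        set t : ℤ := (n:ℤ) + 3 with hts
        have ht : 3 ≤ t := by omega
        have hb0 : (0:ℝ) < 2^(t+1) := zpow_pos (by norm_num) _
        have hr : ∀ x ∈ Set.Ico ((2:ℝ)^(t-1)) ((2:ℝ)^t),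
            ((2:ℝ)^(t+1))^(γ-1) ≤ rieszPotential1 γ ((annulus1 1).indicator (fun _ => (1:ℝ))) x := by
          intro x hx
          refine riesz_lb γ hγ1 (a := 2) (by norm_num) ?_
          intro y hy
          obtain ⟨hy1, hy2⟩ := hy
          have hy1' : (1:ℝ) ≤ |y| := by simpa using hy1
          have hy2' : |y| < 2 := by simpa using hy2
          have hx4 : (4:ℝ) ≤ x := by
            have h1 : (2:ℝ)^(2:ℤ) ≤ 2^(t-1) := zpow_le_zpow_right₀ (by norm_num) (by omega)
            have h2 : (2:ℝ)^(2:ℤ) = 4 := by norm_num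
            rw [h2] at h1
            have hxl : (2:ℝ)^(t-1) ≤ x := hx.1
            linarith
          have hxu : x < 2^t := hx.2
          have h2t : (2:ℝ)^(t+1) = 2^t * 2 := by
            rw [zpow_add_one₀ (by norm_num : (2:ℝ) ≠ 0)]
          have h2le : (2:ℝ) ≤ 2^t := by
            have := zpow_le_zpow_right₀ (by norm_num : (1:ℝ) ≤ 2) (by omega : (1:ℤ) ≤ t)
            simpa using this
          constructor
          · have h := abs_sub_abs_le_abs_sub x y
            rw [abs_of_pos (by linarith : (0:ℝ) < x)] at h
            linarith
          · calc |x - y| = |x + (-y)| := by ring_nf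
              _ ≤ |x| + |(-y)| := abs_add_le _ _
              _ = x + |y| := by rw [abs_of_pos (by linarith : (0:ℝ) < x), abs_neg]
              _ ≤ 2^(t+1) := by linarith
        refine le_trans ?_ (key t _ (Real.rpow_pos_of_pos hb0 _) hr)
        have hc2 : ENNReal.ofReal (((2:ℝ)^(t+1))^(γ-1))
            = (2:ℝ≥0∞) ^ (((t:ℝ)+1)*(γ-1)) := by
          rw [← two_rpow_ofReal]
          congr 1
          rw [← Real.rpow_intCast 2 (t+1), ← Real.rpow_mul (by norm_num)]
          congr 1
          push_cast
          ring
        rw [hc2, ← ENNReal.rpow_mul, ← ENNReal.rpow_add _ _ (by norm_num) (by norm_num)]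
        refine ENNReal.rpow_le_rpow_of_exponent_le (by norm_num) ?_
        have h0t : (0:ℝ) ≤ (t:ℝ) := by exact_mod_cast (by omega : (0:ℤ) ≤ t)
        have hs : 0 ≤ γ - 1 + lam + β * (1/p2) := by rw [hβp2]; linarith
        have hprod : 0 ≤ (t:ℝ) * (γ - 1 + lam + β*(1/p2)) := mul_nonneg h0t hs
        have hid : ((t:ℝ)+1)*(γ-1)*q2 + ((t:ℝ)*lam + ((t:ℝ)*β - 1)*(1/p2))*q2
            - (γ - 1 - 1/p2)*q2 = ((t:ℝ)*(γ - 1 + lam + β*(1/p2)))*q2 := by ring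
        nlinarith [mul_nonneg hprod hq2pos.le]
    rw [herzNorm1, htop]
    exact ENNReal.top_rpow_of_pos (by positivity)
  · -- Herz norm of the indicator is finite
    have hP0 : (ENNReal.ofReal p1) ≠ 0 := (ENNReal.ofReal_pos.2 hp1pos).ne'
    have hPt : (ENNReal.ofReal p1) ≠ ⊤ := ENNReal.ofReal_ne_top
    have hzero : ∀ t : ℤ, t ≠ 1 →
        (2:ℝ≥0∞) ^ ((t:ℝ)*lam*q1) *
          (eLpNorm ((annulus1 t).indicator ((annulus1 1).indicator (fun _ => (1:ℝ))))
            (ENNReal.ofReal p1) volume) ^ q1 = 0 := by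
      intro t ht
      have hdisj : annulus1 t ∩ annulus1 1 = ∅ := by
        ext x
        simp only [Set.mem_inter_iff, Set.mem_empty_iff_false, iff_false, not_and]
        rintro ⟨h1, h2⟩ ⟨h3, h4⟩
        have ha : (2:ℝ)^(t-1) < 2^(1:ℤ) := lt_of_le_of_lt h1 h4
        have hb : (2:ℝ)^(1-1:ℤ) < 2^t := lt_of_le_of_lt h3 h2
        rw [zpow_lt_zpow_iff_right₀ (by norm_num : (1:ℝ) < 2)] at ha hb
        omega
      have hind : (annulus1 t).indicator ((annulus1 1).indicator (fun _ => (1:ℝ)))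
          = (0 : ℝ → ℝ) := by
        rw [Set.indicator_indicator, hdisj, Set.indicator_empty]
        rfl
      rw [hind, eLpNorm_zero, ENNReal.zero_rpow_of_pos hq1pos, mul_zero]
    rw [herzNorm1, tsum_eq_single 1 hzero]
    have hself : (annulus1 1).indicator ((annulus1 1).indicator (fun _ => (1:ℝ)))
        = (annulus1 1).indicator (fun _ => (1:ℝ)) := by
      rw [Set.indicator_indicator, Set.inter_self]
    have hterm : (2:ℝ≥0∞) ^ (((1:ℤ):ℝ)*lam*q1) *
        (eLpNorm ((annulus1 1).indicator ((annulus1 1).indicator (fun _ => (1:ℝ))))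
          (ENNReal.ofReal p1) volume) ^ q1 ≠ ⊤ := by
      rw [hself, eLpNorm_indicator_const (measurableSet_annulus1 1) hP0 hPt]
      refine ENNReal.mul_ne_top (two_rpow_ne_top _) ?_
      refine ENNReal.rpow_ne_top_of_nonneg hq1pos.le ?_
      exact ENNReal.mul_ne_top ENNReal.coe_ne_top
        (ENNReal.rpow_ne_top_of_nonneg (by positivity) (volume_annulus1_ne_top 1))
    exact ENNReal.rpow_ne_top_of_nonneg (by positivity) hterm
end

section
/- (Necessity of $q_1\leq q_2$.) Let $n=1$, $1<p_1<p_2<\infty$, $0<\gamma<1/p_1$, $\gamma-\frac1{p_1}<\lambda<1-\frac1{p_1}$, $\beta=p_2(\frac1{p_1}-\gamma)\leq1$, and $\mu$ the measure with density $x^{\beta-1}\chi_{(0,\infty)}$. If there exists $C$ with $\|I_\gamma f\|_{\dot K^{p_2}_{\lambda,q_2}(\mathbb{R},\mu)} \leq C\|f\|_{\dot K^{p_1}_{\lambda,q_1}(\mathbb{R},m)}$ for all $f$, then $q_1\leq q_2$. -/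
open MeasureTheory ENNReal

noncomputable def P2 (e : ℝ) : ℝ≥0∞ := (2:ℝ≥0∞) ^ e

lemma P2_ne_zero (e : ℝ) : P2 e ≠ 0 := by
  simp [P2, ENNReal.rpow_eq_zero_iff]

lemma P2_ne_top (e : ℝ) : P2 e ≠ ⊤ := by
  simp [P2, ENNReal.rpow_eq_top_iff]

lemma P2_add (x y : ℝ) : P2 (x + y) = P2 x * P2 y := by
  unfold P2
  rw [ENNReal.rpow_add _ _ (by norm_num) (by norm_num)]

lemma P2_rpow (x y : ℝ) : (P2 x) ^ y = P2 (x * y) := by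
  simp [P2, ← ENNReal.rpow_mul]

lemma ofReal_two_rpow (e : ℝ) : ENNReal.ofReal ((2:ℝ) ^ e) = P2 e := by
  rw [← ENNReal.ofReal_rpow_of_pos two_pos, ENNReal.ofReal_ofNat]
  rfl

lemma ofReal_two_zpow (t : ℤ) : ENNReal.ofReal ((2:ℝ) ^ t) = P2 t := by
  rw [← Real.rpow_intCast 2 t, ofReal_two_rpow]

lemma nnnorm_two_rpow (e : ℝ) : ((‖(2:ℝ) ^ e‖₊ : ℝ≥0∞)) = P2 e := by
  rw [← enorm_eq_nnnorm, Real.enorm_eq_ofReal (Real.rpow_nonneg (by norm_num) _), ofReal_two_rpow]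

lemma kernel_integrableOn {r : ℝ} (hr : -1 < r) (x A B : ℝ) :
    MeasureTheory.IntegrableOn (fun y => |x - y| ^ r) (Set.Ioo A B) := by
  rcases le_or_gt B A with hBA | hAB
  · rw [Set.Ioo_eq_empty (by exact fun hhh => absurd hBA (not_le.mpr hhh))]
    exact integrableOn_empty
  · have h1 : IntervalIntegrable (fun y => (y - x) ^ r) volume A B := by
      have := (intervalIntegral.intervalIntegrable_rpow' (a := A - x) (b := B - x) hr).comp_sub_right x
      simpa using this
    have h2 : IntervalIntegrable (fun y => (x - y) ^ r) volume A B := by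
      have := (intervalIntegral.intervalIntegrable_rpow' (a := x - A) (b := x - B) hr).comp_sub_left x
      simpa using this
    have h12 : IntegrableOn (fun y => |(y - x) ^ r| + |(x - y) ^ r|) (Set.Ioo A B) volume := by
      have := (h1.abs.add h2.abs).1
      rw [integrableOn_Ioc_iff_integrableOn_Ioo] at this
      exact this
    refine h12.integrable.mono ?_ (Filter.Eventually.of_forall fun y => ?_)
    · exact ((measurable_const.sub measurable_id).abs.pow_const r).aestronglyMeasurable
    · rw [Real.norm_of_nonneg (Real.rpow_nonneg (abs_nonneg _) _)]
      rcases le_total x y with hxy | hxy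
      · have : |x - y| ^ r = (y - x) ^ r := by rw [abs_sub_comm, abs_of_nonneg (by linarith)]
        rw [this, Real.norm_of_nonneg (by positivity : (0:ℝ) ≤ |(y - x) ^ r| + |(x - y) ^ r|)]
        have h0 : (0:ℝ) ≤ |(x - y) ^ r| := abs_nonneg _
        linarith [le_abs_self ((y - x) ^ r)]
      · have : |x - y| ^ r = (x - y) ^ r := by rw [abs_of_nonneg (by linarith)]
        rw [this, Real.norm_of_nonneg (by positivity : (0:ℝ) ≤ |(y - x) ^ r| + |(x - y) ^ r|)]
        have h0 : (0:ℝ) ≤ |(y - x) ^ r| := abs_nonneg _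
        linarith [le_abs_self ((x - y) ^ r)]

lemma P2_def (e : ℝ) : (2:ℝ≥0∞) ^ e = P2 e := rfl


lemma herz_rhs_bound (p1 lam q1 a : ℝ) (hp1 : 1 < p1) (hq1 : 1 ≤ q1)
    (ha_def : a = lam + 1/p1) (ha : 0 < a) (k : ℕ) :
    herzNorm1 (ENNReal.ofReal p1) lam q1 volume
      ((Set.Ioo (1:ℝ) (2^k)).indicator fun x => x ^ (-a))
      ≤ (k : ℝ≥0∞) ^ (1/q1) * P2 (a + 1/p1) := by
  have hp1p : (0:ℝ) < p1 := by linarith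
  have hq1p : (0:ℝ) < q1 := by linarith
  simp only [herzNorm1]
  set f : ℝ → ℝ := (Set.Ioo (1:ℝ) (2^k)).indicator (fun x => x ^ (-a)) with hf
  set G : ℤ → ℝ≥0∞ := fun t => (2:ℝ≥0∞) ^ ((t:ℝ) * lam * q1) *
      (eLpNorm ((annulus1 t).indicator f) (ENNReal.ofReal p1) volume) ^ q1 with hG
  have hzero : ∀ t ∉ Finset.Icc (1:ℤ) (k:ℤ), G t = 0 := by
    intro t ht
    have hind : (annulus1 t).indicator f = fun _ => (0:ℝ) := by
      funext x
      by_cases hx : x ∈ annulus1 t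
      · rw [Set.indicator_of_mem hx, hf]
        apply Set.indicator_of_notMem
        intro hx2
        obtain ⟨hx1, hxk⟩ := hx2
        have hxabs : |x| = x := abs_of_pos (by linarith)
        simp only [Finset.mem_Icc, not_and, not_le] at ht
        rcases lt_or_ge t 1 with h1 | h1
        · have h2 : (2:ℝ)^t ≤ (2:ℝ)^(0:ℤ) := zpow_le_zpow_right₀ one_le_two (by omega)
          rw [zpow_zero] at h2
          have h3 := hx.2
          rw [hxabs] at h3
          linarith
        · have hk : (k:ℤ) < t := ht h1
          have h2 : (2:ℝ)^((k:ℤ)) ≤ (2:ℝ)^(t-1) := zpow_le_zpow_right₀ one_le_two (by omega)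
          rw [zpow_natCast] at h2
          have h3 := hx.1
          rw [hxabs] at h3
          linarith
      · exact Set.indicator_of_notMem hx _
    rw [hG]
    simp only [hind]
    rw [eLpNorm_zero', ENNReal.zero_rpow_of_pos hq1p, mul_zero]
  have hbound : ∀ t ∈ Finset.Icc (1:ℤ) (k:ℤ), G t ≤ P2 ((a + 1/p1) * q1) := by
    intro t _
    have hMnn : (0:ℝ) ≤ ((2:ℝ)^(t-1:ℤ)) ^ (-a) := Real.rpow_nonneg (by positivity) _
    have h1 : eLpNorm ((annulus1 t).indicator f) (ENNReal.ofReal p1) volume ≤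
        eLpNorm ((annulus1 t).indicator fun _ => ((2:ℝ)^(t-1:ℤ)) ^ (-a))
          (ENNReal.ofReal p1) volume := by
      apply eLpNorm_mono
      intro x
      by_cases hx : x ∈ annulus1 t
      · rw [Set.indicator_of_mem hx, Set.indicator_of_mem hx, hf]
        by_cases hx2 : x ∈ Set.Ioo (1:ℝ) (2^k)
        · rw [Set.indicator_of_mem hx2,
            Real.norm_of_nonneg (Real.rpow_nonneg (by linarith [hx2.1]) _),
            Real.norm_of_nonneg hMnn]
          have hxx : |x| = x := abs_of_pos (by linarith [hx2.1])
          exact Real.rpow_le_rpow_of_nonpos (by positivity) (by rw [← hxx]; exact hx.1)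
            (by linarith)
        · rw [Set.indicator_of_notMem hx2, norm_zero, Real.norm_of_nonneg hMnn]
          exact hMnn
      · rw [Set.indicator_of_notMem hx, Set.indicator_of_notMem hx]
    have h2 : eLpNorm ((annulus1 t).indicator fun _ => ((2:ℝ)^(t-1:ℤ)) ^ (-a))
          (ENNReal.ofReal p1) volume
        = (‖((2:ℝ)^(t-1:ℤ)) ^ (-a)‖₊ : ℝ≥0∞) * (volume (annulus1 t)) ^ (1/p1) := by
      rw [eLpNorm_indicator_const (measurableSet_annulus1 t)
        (by simp [hp1p, ENNReal.ofReal_eq_zero, not_le]) ENNReal.ofReal_ne_top,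
        ENNReal.toReal_ofReal hp1p.le]
      rfl
    have hvol : volume (annulus1 t) ≤ P2 ((t:ℝ) + 1) := by
      have hsub : annulus1 t ⊆ Set.Ioo (-(2:ℝ)^t) ((2:ℝ)^t) := fun x hx => abs_lt.mp hx.2
      calc volume (annulus1 t) ≤ volume (Set.Ioo (-(2:ℝ)^t) ((2:ℝ)^t)) := measure_mono hsub
        _ = ENNReal.ofReal ((2:ℝ)^t - -(2:ℝ)^t) := Real.volume_Ioo
        _ = P2 ((t:ℝ) + 1) := by
            rw [show (2:ℝ)^t - -(2:ℝ)^t = (2:ℝ)^(t+1:ℤ) by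
              rw [zpow_add_one₀ (two_ne_zero)]; ring, ofReal_two_zpow]
            congr 1
            push_cast
            ring
    have hnn : (‖((2:ℝ)^(t-1:ℤ)) ^ (-a)‖₊ : ℝ≥0∞) = P2 (((t:ℝ) - 1) * (-a)) := by
      rw [show ((2:ℝ)^(t-1:ℤ)) ^ (-a) = (2:ℝ) ^ ((((t:ℝ))-1) * (-a)) by
        rw [← Real.rpow_intCast 2 (t-1), ← Real.rpow_mul (by norm_num)]
        congr 1
        push_cast
        ring, nnnorm_two_rpow]
    calc G t ≤ (2:ℝ≥0∞) ^ ((t:ℝ) * lam * q1) *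
        ((P2 (((t:ℝ) - 1) * (-a))) * (P2 ((t:ℝ)+1)) ^ (1/p1)) ^ q1 := by
          rw [hG]
          apply mul_le_mul_right
          apply ENNReal.rpow_le_rpow _ hq1p.le
          refine h1.trans (h2.le.trans ?_)
          rw [hnn]
          exact mul_le_mul_right (ENNReal.rpow_le_rpow hvol (one_div_nonneg.mpr hp1p.le)) _
      _ = P2 ((a + 1/p1) * q1) := by
          simp only [P2_def, P2_rpow, ← P2_add]
          congr 1
          subst ha_def
          field_simp
          ring
  calc (∑' t:ℤ, G t) ^ (1/q1) ≤ ((k:ℝ≥0∞) * P2 ((a+1/p1)*q1)) ^ (1/q1) := by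
        apply ENNReal.rpow_le_rpow _ (one_div_nonneg.mpr hq1p.le)
        rw [tsum_eq_sum hzero]
        calc ∑ t ∈ Finset.Icc (1:ℤ) (k:ℤ), G t
            ≤ ∑ _t ∈ Finset.Icc (1:ℤ) (k:ℤ), P2 ((a+1/p1)*q1) := Finset.sum_le_sum hbound
          _ = (k:ℝ≥0∞) * P2 ((a+1/p1)*q1) := by
              rw [Finset.sum_const, nsmul_eq_mul]
              congr 1
              rw [Int.card_Icc]
              simp
    _ = (k:ℝ≥0∞) ^ (1/q1) * P2 (a + 1/p1) := by
        rw [ENNReal.mul_rpow_of_nonneg _ _ (one_div_nonneg.mpr hq1p.le), P2_rpow]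
        congr 1
        rw [mul_one_div, mul_div_cancel_right₀ _ hq1p.ne']


lemma herz_lhs_bound (p1 p2 γ β lam q2 a : ℝ)
    (hp1 : 1 < p1) (hp2p : 0 < p2)
    (hγ0 : 0 < γ) (hγ1 : γ < 1)
    (ha_def : a = lam + 1/p1) (ha : 0 < a)
    (hβ_def : β = p2 * (1/p1 - γ)) (hβ1 : β ≤ 1) (hq2 : 1 ≤ q2)
    (k : ℕ) :
    (k:ℝ≥0∞) ^ (1/q2) * P2 (-(1 + 1/p2)) ≤
      herzNorm1 (ENNReal.ofReal p2) lam q2 (muBeta β)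
        (rieszPotential1 γ ((Set.Ioo (1:ℝ) (2^k)).indicator fun x => x ^ (-a))) := by
  have hq2p : (0:ℝ) < q2 := by linarith
  have hp1p : (0:ℝ) < p1 := by linarith
  have hp2ne : p2 ≠ 0 := hp2p.ne'
  have hp1ne : p1 ≠ 0 := hp1p.ne'
  simp only [herzNorm1]
  set f : ℝ → ℝ := (Set.Ioo (1:ℝ) (2^k)).indicator (fun x => x ^ (-a)) with hf
  have hfnonneg : ∀ y, 0 ≤ f y := by
    intro y
    rw [hf]
    apply Set.indicator_nonneg
    intro y hy
    exact Real.rpow_nonneg (by linarith [hy.1]) _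
  set G : ℤ → ℝ≥0∞ := fun t => (2:ℝ≥0∞) ^ ((t:ℝ) * lam * q2) *
      (eLpNorm ((annulus1 t).indicator (rieszPotential1 γ f)) (ENNReal.ofReal p2) (muBeta β)) ^ q2
    with hG
  have hbound : ∀ t ∈ Finset.Icc (1:ℤ) (k:ℤ), P2 ((-(1 + 1/p2)) * q2) ≤ G t := by
    intro t ht
    rw [Finset.mem_Icc] at ht
    set L : ℝ := (2:ℝ) ^ (t-1:ℤ) with hL
    set U : ℝ := (2:ℝ) ^ (t:ℤ) with hU
    have hL0 : 0 < L := by positivity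
    have hU2L : U = 2 * L := by
      rw [hU, hL, show (t:ℤ) = (t-1) + 1 by ring, zpow_add_one₀ two_ne_zero]; ring
    have hU0 : 0 < U := by rw [hU2L]; linarith
    have hL1 : 1 ≤ L := by
      rw [hL, show (1:ℝ) = (2:ℝ)^(0:ℤ) by norm_num]
      exact zpow_le_zpow_right₀ one_le_two (by omega)
    have hUk : U ≤ (2:ℝ)^k := by
      rw [hU, show (2:ℝ)^k = (2:ℝ)^(k:ℤ) by rw [zpow_natCast]]
      exact zpow_le_zpow_right₀ one_le_two (by omega)
    have hLr : L = (2:ℝ) ^ ((t:ℝ) - 1) := by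
      rw [hL, ← Real.rpow_intCast 2 (t-1)]
      congr 1
      push_cast
      ring
    have hUr : U = (2:ℝ) ^ ((t:ℝ)) := by
      rw [hU, ← Real.rpow_intCast 2 t]
    set T : Set ℝ := Set.Ioo L U with hT
    have hTsubIoo : T ⊆ Set.Ioo (1:ℝ) (2^k) := fun y hy =>
      ⟨lt_of_le_of_lt hL1 hy.1, lt_of_lt_of_le hy.2 hUk⟩
    have hTann : T ⊆ annulus1 t := by
      intro y hy
      have hy0 : 0 < y := lt_trans hL0 hy.1
      exact ⟨by rw [abs_of_pos hy0]; exact hy.1.le, by rw [abs_of_pos hy0]; exact hy.2⟩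
    set m : ℝ := (2:ℝ) ^ ((t:ℝ) * (γ - 1 - a) + ((t:ℝ) - 1)) with hm
    have hm0 : 0 < m := Real.rpow_pos_of_pos two_pos _
    have key : ∀ x ∈ T, m ≤ rieszPotential1 γ f x := by
      intro x hx
      have hx0 : 0 < x := lt_trans hL0 hx.1
      have hfi : Integrable (fun y => |x - y| ^ (γ-1) * f y) volume := by
        have hset : (fun y => |x - y| ^ (γ-1) * f y)
            = (Set.Ioo (1:ℝ) (2^k)).indicator (fun y => |x - y| ^ (γ-1) * y^(-a)) := by
          funext y
          by_cases hy : y ∈ Set.Ioo (1:ℝ) ((2:ℝ)^k)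
          · rw [hf, Set.indicator_of_mem hy, Set.indicator_of_mem hy]
          · rw [hf, Set.indicator_of_notMem hy, Set.indicator_of_notMem hy, mul_zero]
        rw [hset, integrable_indicator_iff measurableSet_Ioo]
        apply Integrable.mono (kernel_integrableOn (by linarith : (-1:ℝ) < γ-1) x 1 ((2:ℝ)^k))
        · exact (((measurable_const.sub measurable_id).abs.pow_const _).mul
            (measurable_id.pow_const _)).aestronglyMeasurable
        · rw [MeasureTheory.ae_restrict_iff' measurableSet_Ioo]
          apply Filter.Eventually.of_forall
          intro y hy
          have hy1 : (1:ℝ) < y := hy.1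
          have hk1 : (0:ℝ) ≤ |x - y| ^ (γ-1) := Real.rpow_nonneg (abs_nonneg _) _
          rw [Real.norm_of_nonneg (mul_nonneg hk1 (Real.rpow_nonneg (by linarith) _)),
            Real.norm_of_nonneg hk1]
          exact mul_le_of_le_one_right hk1
            (Real.rpow_le_one_of_one_le_of_nonpos hy1.le (by linarith))
      have hnonneg : ∀ y, 0 ≤ |x - y| ^ (γ-1) * f y := fun y =>
        mul_nonneg (Real.rpow_nonneg (abs_nonneg _) _) (hfnonneg y)
      set c : ℝ := U ^ (γ-1) * U ^ (-a) with hc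
      have hptwise : ∀ y ∈ T \ {x}, c ≤ |x - y| ^ (γ-1) * f y := by
        intro y hy
        obtain ⟨hyT, hyx⟩ := hy
        have hy0 : 0 < y := lt_trans hL0 hyT.1
        have hfy : f y = y ^ (-a) := by
          rw [hf, Set.indicator_of_mem (hTsubIoo hyT)]
        have hyx' : y ≠ x := hyx
        have hxy0 : 0 < |x - y| := abs_pos.mpr (sub_ne_zero.mpr (fun hh => hyx' hh.symm))
        have hxyU : |x - y| ≤ U := by
          rw [abs_le]
          have b1 := hx.1; have b2 := hx.2; have b3 := hyT.1; have b4 := hyT.2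
          constructor <;> linarith
        have h1 : U ^ (γ-1) ≤ |x - y| ^ (γ-1) :=
          Real.rpow_le_rpow_of_nonpos hxy0 hxyU (by linarith)
        have h2 : U ^ (-a) ≤ y ^ (-a) :=
          Real.rpow_le_rpow_of_nonpos hy0 hyT.2.le (by linarith)
        rw [hfy, hc]
        exact mul_le_mul h1 h2 (Real.rpow_nonneg hU0.le _) (Real.rpow_nonneg (abs_nonneg _) _)
      have hsm : MeasurableSet (T \ {x}) := measurableSet_Ioo.diff (measurableSet_singleton x)
      have hμs : volume (T \ {x}) = ENNReal.ofReal L := by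
        rw [measure_diff_null (Real.volume_singleton), Real.volume_Ioo]
        congr 1
        linarith
      have hint : c * L ≤ ∫ y in T \ {x}, |x - y| ^ (γ-1) * f y := by
        have h := setIntegral_ge_of_const_le hsm
          (by rw [hμs]; exact ENNReal.ofReal_ne_top) hptwise hfi.integrableOn
        rwa [measureReal_def, hμs, ENNReal.toReal_ofReal hL0.le, smul_eq_mul, mul_comm] at h
      have hint2 : (∫ y in T \ {x}, |x - y| ^ (γ-1) * f y) ≤ ∫ y, |x - y| ^ (γ-1) * f y :=
        setIntegral_le_integral hfi (Filter.Eventually.of_forall hnonneg)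
      have hmcL : m = c * L := by
        rw [hm, hc, hUr, hLr, ← Real.rpow_mul (by norm_num), ← Real.rpow_mul (by norm_num),
          ← Real.rpow_add two_pos, ← Real.rpow_add two_pos]
        congr 1
        ring
      rw [rieszPotential1]
      calc m = c * L := hmcL
        _ ≤ _ := hint
        _ ≤ _ := hint2
    have h1 : eLpNorm (T.indicator fun _ => m) (ENNReal.ofReal p2) (muBeta β)
        ≤ eLpNorm ((annulus1 t).indicator (rieszPotential1 γ f)) (ENNReal.ofReal p2) (muBeta β) := by
      apply eLpNorm_mono
      intro x
      by_cases hx : x ∈ T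
      · rw [Set.indicator_of_mem hx, Set.indicator_of_mem (hTann hx),
          Real.norm_of_nonneg hm0.le, Real.norm_eq_abs]
        exact (key x hx).trans (le_abs_self _)
      · rw [Set.indicator_of_notMem hx, norm_zero]
        exact norm_nonneg _
    have h2 : eLpNorm (T.indicator fun _ => m) (ENNReal.ofReal p2) (muBeta β)
        = P2 ((t:ℝ) * (γ - 1 - a) + ((t:ℝ) - 1)) * (muBeta β T) ^ (1/p2) := by
      rw [eLpNorm_indicator_const measurableSet_Ioo
        (by simp [hp2p, ENNReal.ofReal_eq_zero, not_le]) ENNReal.ofReal_ne_top,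
        ENNReal.toReal_ofReal hp2p.le, hm, enorm_eq_nnnorm, nnnorm_two_rpow]
    have hμT : P2 ((t:ℝ)*β - 1) ≤ muBeta β T := by
      rw [muBeta, withDensity_apply _ measurableSet_Ioo]
      have heq : P2 ((t:ℝ)*β - 1) = ENNReal.ofReal (U ^ (β-1)) * volume T := by
        rw [Real.volume_Ioo, show U - L = L by linarith,
          ← ENNReal.ofReal_mul (Real.rpow_nonneg hU0.le _), hUr, hLr,
          ← Real.rpow_mul (by norm_num), ← Real.rpow_add two_pos, ofReal_two_rpow]
        congr 1
        ring
      rw [heq, ← setLIntegral_const]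
      apply setLIntegral_mono' measurableSet_Ioo
      intro y hy
      have hy0 : 0 < y := lt_trans hL0 hy.1
      rw [if_pos hy0]
      exact ENNReal.ofReal_le_ofReal (Real.rpow_le_rpow_of_nonpos hy0 hy.2.le (by linarith))
    calc P2 ((-(1 + 1/p2)) * q2)
        = (2:ℝ≥0∞)^((t:ℝ)*lam*q2) *
            (P2 ((t:ℝ)*(γ-1-a)+((t:ℝ)-1)) * (P2 ((t:ℝ)*β-1))^(1/p2))^q2 := by
          simp only [P2_def, P2_rpow, ← P2_add]
          congr 1
          subst ha_def
          subst hβ_def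
          field_simp
          ring
      _ ≤ G t := by
          rw [hG]
          apply mul_le_mul_right
          apply ENNReal.rpow_le_rpow _ hq2p.le
          calc P2 ((t:ℝ)*(γ-1-a)+((t:ℝ)-1)) * (P2 ((t:ℝ)*β-1))^(1/p2)
              ≤ P2 ((t:ℝ)*(γ-1-a)+((t:ℝ)-1)) * (muBeta β T)^(1/p2) :=
                mul_le_mul_right (ENNReal.rpow_le_rpow hμT (one_div_nonneg.mpr hp2p.le)) _
            _ = eLpNorm (T.indicator fun _ => m) (ENNReal.ofReal p2) (muBeta β) := h2.symm
            _ ≤ _ := h1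
  calc (k:ℝ≥0∞) ^ (1/q2) * P2 (-(1+1/p2))
      = ((k:ℝ≥0∞) * P2 ((-(1+1/p2))*q2)) ^ (1/q2) := by
        rw [ENNReal.mul_rpow_of_nonneg _ _ (one_div_nonneg.mpr hq2p.le), P2_rpow,
          mul_one_div, mul_div_cancel_right₀ _ hq2p.ne']
    _ ≤ (∑' t : ℤ, G t) ^ (1/q2) := by
        apply ENNReal.rpow_le_rpow _ (one_div_nonneg.mpr hq2p.le)
        calc (k:ℝ≥0∞) * P2 ((-(1+1/p2))*q2)
            = ∑ _t ∈ Finset.Icc (1:ℤ) (k:ℤ), P2 ((-(1+1/p2))*q2) := by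
              rw [Finset.sum_const, nsmul_eq_mul, Int.card_Icc]
              norm_num
          _ ≤ ∑ t ∈ Finset.Icc (1:ℤ) (k:ℤ), G t := Finset.sum_le_sum hbound
          _ ≤ ∑' t : ℤ, G t := ENNReal.sum_le_tsum _


/-- necessity of `q₁ ≤ q₂`: if the trace inequality
`‖I_γ f‖_{K̇^{p₂}_{λ,q₂}(μ)} ≤ C ‖f‖_{K̇^{p₁}_{λ,q₁}(m)}` holds for all `f`,
with `μ = muBeta β`, `β = p₂(1/p₁-γ) ≤ 1`, then `q₁ ≤ q₂`. -/
theorem q_monotonicity_necessary (p1 p2 γ β lam q1 q2 : ℝ)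
    (hp1 : 1 < p1) (h12 : p1 < p2) (hγ0 : 0 < γ) (hγ : γ < 1 / p1)
    (hlam1 : γ - 1 / p1 < lam) (hlam2 : lam < 1 - 1 / p1)
    (hβ : β = p2 * (1 / p1 - γ)) (hβ1 : β ≤ 1)
    (hq1 : 1 ≤ q1) (hq2 : 1 ≤ q2)
    (C : ℝ≥0∞) (hC : C ≠ ⊤)
    (h : ∀ f : ℝ → ℝ, Measurable f →
      herzNorm1 (ENNReal.ofReal p2) lam q2 (muBeta β) (rieszPotential1 γ f)
        ≤ C * herzNorm1 (ENNReal.ofReal p1) lam q1 volume f) :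
    q1 ≤ q2 := by
  by_contra hq
  push_neg at hq
  have hp1p : (0:ℝ) < p1 := by linarith
  have hp2p : (0:ℝ) < p2 := by linarith
  have hq1p : (0:ℝ) < q1 := by linarith
  have hq2p : (0:ℝ) < q2 := by linarith
  have h1p1 : 1/p1 < 1 := by rw [div_lt_one hp1p]; linarith
  have hγ1 : γ < 1 := lt_trans hγ h1p1
  set a : ℝ := lam + 1/p1 with ha_def
  have ha : 0 < a := by rw [ha_def]; linarith
  have hmain : ∀ k : ℕ, (k:ℝ≥0∞) ^ (1/q2) * P2 (-(1+1/p2)) ≤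
      C * ((k:ℝ≥0∞) ^ (1/q1) * P2 (a + 1/p1)) := by
    intro k
    have hmeas : Measurable ((Set.Ioo (1:ℝ) (2^k)).indicator fun x => x ^ (-a)) :=
      (measurable_id.pow_const _).indicator measurableSet_Ioo
    refine le_trans
      (herz_lhs_bound p1 p2 γ β lam q2 a hp1 hp2p hγ0 hγ1 ha_def ha hβ hβ1 hq2 k)
      (le_trans (h _ hmeas)
        (mul_le_mul_right (herz_rhs_bound p1 lam q1 a hp1 hq1 ha_def ha k) C))
  set c0 : ℝ≥0∞ := P2 (-(1+1/p2)) with hc0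
  set D : ℝ≥0∞ := C * P2 (a + 1/p1) with hD
  have hD_top : D ≠ ⊤ := ENNReal.mul_ne_top hC (P2_ne_top _)
  set E : ℝ≥0∞ := c0⁻¹ * D with hE
  have hE_top : E ≠ ⊤ := ENNReal.mul_ne_top (by simp [hc0, P2_ne_zero]) hD_top
  have hmain2 : ∀ k : ℕ, (k:ℝ≥0∞) ^ (1/q2) ≤ E * (k:ℝ≥0∞) ^ (1/q1) := by
    intro k
    calc (k:ℝ≥0∞)^(1/q2) = c0⁻¹ * ((k:ℝ≥0∞)^(1/q2) * c0) := by
          rw [mul_comm ((k:ℝ≥0∞)^(1/q2)) c0, ← mul_assoc,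
            ENNReal.inv_mul_cancel (by simp [hc0, P2_ne_zero]) (by simp [hc0, P2_ne_top]), one_mul]
      _ ≤ c0⁻¹ * (C * ((k:ℝ≥0∞)^(1/q1) * P2 (a+1/p1))) := mul_le_mul_right (hmain k) _
      _ = E * (k:ℝ≥0∞)^(1/q1) := by rw [hE, hD]; ring
  set M : ℝ := E.toReal with hM
  have hM0 : 0 ≤ M := ENNReal.toReal_nonneg
  have hreal : ∀ k : ℕ, (k:ℝ) ^ (1/q2) ≤ M * (k:ℝ) ^ (1/q1) := by
    intro k
    have hne : E * (k:ℝ≥0∞) ^ (1/q1) ≠ ⊤ :=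
      ENNReal.mul_ne_top hE_top
        (ENNReal.rpow_ne_top_of_nonneg (one_div_nonneg.mpr hq1p.le) (ENNReal.natCast_ne_top k))
    have h1 := ENNReal.toReal_mono hne (hmain2 k)
    rw [ENNReal.toReal_mul, ← ENNReal.toReal_rpow, ← ENNReal.toReal_rpow] at h1
    simpa using h1
  set ε : ℝ := 1/q2 - 1/q1 with hε
  have hεp : 0 < ε := by
    rw [hε]
    have : 1/q1 < 1/q2 := one_div_lt_one_div_of_lt hq2p hq
    linarith
  obtain ⟨k, hk⟩ := exists_nat_gt ((M+1) ^ (1/ε))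
  have hMk : (0:ℝ) < (M+1)^(1/ε) := Real.rpow_pos_of_pos (by linarith) _
  have hk0 : (0:ℝ) < (k:ℝ) := lt_trans hMk hk
  have hX0 : 0 < (k:ℝ)^(1/q1) := Real.rpow_pos_of_pos hk0 _
  have hk1 : (1:ℝ) ≤ (k:ℝ) := by
    have : (1:ℕ) ≤ k := by exact_mod_cast Nat.one_le_iff_ne_zero.mpr (by
      intro hk'
      rw [hk'] at hk0
      norm_num at hk0)
    exact_mod_cast this
  have hk1r : (1:ℝ) ≤ (k:ℝ) ^ (1/q1) := by
    calc (1:ℝ) = (1:ℝ) ^ (1/q1) := (Real.one_rpow _).symm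
      _ ≤ (k:ℝ) ^ (1/q1) := Real.rpow_le_rpow zero_le_one hk1 (one_div_nonneg.mpr hq1p.le)
  have hkε : M + 1 < (k:ℝ)^ε := by
    have h2 := Real.rpow_lt_rpow hMk.le hk hεp
    rwa [← Real.rpow_mul (by linarith : (0:ℝ) ≤ M+1), one_div_mul_cancel hεp.ne',
      Real.rpow_one] at h2
  have hsplit : (k:ℝ)^(1/q2) = (k:ℝ)^(1/q1) * (k:ℝ)^ε := by
    rw [← Real.rpow_add hk0]
    congr 1
    rw [hε]
    ring
  have hlt : M * (k:ℝ)^(1/q1) < (k:ℝ)^(1/q2) := by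
    rw [hsplit]
    calc M * (k:ℝ)^(1/q1) < (M+1) * (k:ℝ)^(1/q1) := by nlinarith
      _ ≤ (k:ℝ)^ε * (k:ℝ)^(1/q1) := mul_le_mul_of_nonneg_right hkε.le hX0.le
      _ = (k:ℝ)^(1/q1) * (k:ℝ)^ε := mul_comm _ _
  exact absurd (hreal k) (not_le.mpr hlt)
end
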